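/- Let n ≥ 2 and take the ideal observables A^{(j)}_x. Then for every s ∈ {0,1}^n, the GHZ-basis vector |ξ_s⟩ is an eigenvector of W_s with eigenvalue 2√2(n−1); that is, W_s |ξ_s⟩ = 2√2(n−1) |ξ_s⟩. -/

import Mathlib

open Matrix Finset ComplexOrder

noncomputable section

/-- 2×2 complex matrices. -/
abbrev Mat2 := Matrix (Fin 2) (Fin 2) ℂ

/-- The Pauli matrix `σ_X`. -/
def σX : Mat2 := !![0, 1; 1, 0]

/-- The Pauli matrix `σ_Z`. -/
def σZ : Mat2 := !![1, 0; 0, -1]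

lemma σX_apply (a b : Fin 2) : σX a b = if a = 1 - b then 1 else 0 := by
  fin_cases a <;> fin_cases b <;> norm_num [σX]

lemma σZ_apply (a b : Fin 2) : σZ a b = if a = b then ((-1:ℂ))^(b:ℕ) else 0 := by
  fin_cases a <;> fin_cases b <;> norm_num [σZ]

lemma sqrt2_sq : (Real.sqrt 2 : ℂ) * (Real.sqrt 2 : ℂ) = 2 := by
  exact_mod_cast congrArg (Complex.ofReal) (Real.mul_self_sqrt (by norm_num : (0:ℝ) ≤ 2))
/-- Tensor product of `n` 2×2 matrices, indexed by bit strings `Fin n → Fin 2`. -/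
def tensorN (n : ℕ) (M : Fin n → Mat2) :
    Matrix (Fin n → Fin 2) (Fin n → Fin 2) ℂ :=
  Matrix.of fun f g => ∏ j, M j (f j) (g j)

lemma T1_entry (n : ℕ) [NeZero n] (f g : Fin n → Fin 2) :
    tensorN n (fun j => if j = 0 then (Real.sqrt 2:ℂ) • σX else σX) f g
      = (Real.sqrt 2:ℂ) * (if f = (fun j => 1 - g j) then 1 else 0) := by
  have key : ∀ j : Fin n, (if j = 0 then (Real.sqrt 2:ℂ) • σX else σX) (f j) (g j)
      = (if j = 0 then (Real.sqrt 2:ℂ) else 1) * (if f j = 1 - g j then 1 else 0) := by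
    intro j
    by_cases h : j = 0 <;> simp [h, σX_apply, Matrix.smul_apply]
  simp only [tensorN, Matrix.of_apply]
  rw [Finset.prod_congr rfl (fun j _ => key j), Finset.prod_mul_distrib,
    Finset.prod_ite_eq' Finset.univ (0 : Fin n) (fun _ => (Real.sqrt 2:ℂ)),
    Finset.prod_boole]
  simp [funext_iff]
lemma Tj_entry (n : ℕ) [NeZero n] (j : Fin n) (hj : j ≠ 0) (f g : Fin n → Fin 2) :
    tensorN n (fun k => if k = 0 then (Real.sqrt 2:ℂ) • σZ else if k = j then σZ else 1) f g
      = (Real.sqrt 2:ℂ) * ((-1:ℂ)^((g 0 : ℕ)) * (-1:ℂ)^((g j : ℕ)))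
          * (if f = g then 1 else 0) := by
  have key : ∀ k : Fin n,
      (if k = 0 then (Real.sqrt 2:ℂ) • σZ else if k = j then σZ else 1) (f k) (g k)
      = (if k = 0 then (Real.sqrt 2:ℂ) else 1)
        * (if f k = g k then (if k = 0 ∨ k = j then (-1:ℂ)^((g k : ℕ)) else 1) else 0) := by
    intro k
    by_cases h0 : k = 0
    · simp [h0, σZ_apply, Matrix.smul_apply]
    · by_cases h1 : k = j <;> simp [h0, h1, hj, σZ_apply, Matrix.one_apply]
  simp only [tensorN, Matrix.of_apply]
  rw [Finset.prod_congr rfl (fun k _ => key k), Finset.prod_mul_distrib,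
    Finset.prod_ite_eq' Finset.univ (0 : Fin n) (fun _ => (Real.sqrt 2:ℂ))]
  have h2 : (∏ x : Fin n, if f x = g x then (if x = 0 ∨ x = j then (-1:ℂ)^((g x:ℕ)) else 1) else 0)
      = ((-1:ℂ)^((g 0:ℕ)) * (-1:ℂ)^((g j:ℕ))) * (if f = g then 1 else 0) := by
    by_cases hf : f = g
    · subst hf
      simp only [eq_self_iff_true, if_true, mul_one]
      rw [← Finset.prod_subset (Finset.subset_univ ({0, j} : Finset (Fin n)))
        (by intro x _ hx; simp only [Finset.mem_insert, Finset.mem_singleton] at hx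
            push_neg at hx
            simp [hx.1, hx.2])]
      rw [Finset.prod_pair (Ne.symm hj)]
      simp [hj, Ne.symm hj]
    · obtain ⟨k, hk⟩ : ∃ k, f k ≠ g k := by
        by_contra h; push_neg at h; exact hf (funext h)
      rw [Finset.prod_eq_zero (Finset.mem_univ k) (by simp [hk])]
      simp [hf]
  rw [h2]
  simp only [Finset.mem_univ, if_true]
  ring
/-- The operator `W_s` built from the observables `A^{(j)}_x`. -/
def Wop (n : ℕ) [NeZero n] (A : Fin n → Fin 2 → Mat2) (s : Fin n → Fin 2) :
    Matrix (Fin n → Fin 2) (Fin n → Fin 2) ℂ :=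
  (((n : ℂ) - 1) * (-1 : ℂ) ^ ((s 0 : ℕ))) •
      tensorN n (fun j => if j = 0 then A 0 0 + A 0 1 else A j 0)
    + ∑ j ∈ Finset.univ.filter (fun j : Fin n => j ≠ 0),
        ((-1 : ℂ) ^ ((s j : ℕ))) •
          tensorN n (fun k => if k = 0 then A 0 0 - A 0 1
            else if k = j then A j 1 else 1)

/-- The ideal observables: `A^{(1)}_x = (σ_X + (−1)^x σ_Z)/√2`,
`A^{(j)}_0 = σ_X`, `A^{(j)}_1 = σ_Z` for `j ≠ 1`. -/
def Aideal (n : ℕ) [NeZero n] : Fin n → Fin 2 → Mat2 :=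
  fun j x =>
    if j = 0 then ((Real.sqrt 2 : ℂ))⁻¹ • (σX + ((-1 : ℂ) ^ ((x : ℕ))) • σZ)
    else if x = 0 then σX else σZ

lemma sqrt2_ne : (Real.sqrt 2 : ℂ) ≠ 0 :=
  Complex.ofReal_ne_zero.mpr (ne_of_gt (Real.sqrt_pos.mpr two_pos))

lemma inv_sqrt2_two : ((Real.sqrt 2:ℂ))⁻¹ * 2 = Real.sqrt 2 := by
  rw [inv_mul_eq_iff_eq_mul₀ sqrt2_ne]
  exact sqrt2_sq.symm

lemma Asum (n : ℕ) [NeZero n] : Aideal n 0 0 + Aideal n 0 1 = (Real.sqrt 2:ℂ) • σX := by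
  simp only [Aideal, if_pos rfl]
  norm_num
  match_scalars <;> field_simp <;> norm_num [sqrt2_sq]

lemma Adiff (n : ℕ) [NeZero n] : Aideal n 0 0 - Aideal n 0 1 = (Real.sqrt 2:ℂ) • σZ := by
  simp only [Aideal, if_pos rfl]
  norm_num
  match_scalars <;> field_simp <;> linear_combination -sqrt2_sq
/-- The GHZ-basis vector `|ξ_s⟩ = (|0 s₂ ⋯ s_n⟩ + (−1)^{s₁} |1 s̄₂ ⋯ s̄_n⟩)/√2`. -/
def ghz (n : ℕ) [NeZero n] (s : Fin n → Fin 2) : (Fin n → Fin 2) → ℂ :=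
  fun f => ((Real.sqrt 2 : ℂ))⁻¹ *
    ((if f = (fun j => if j = 0 then 0 else s j) then 1 else 0)
      + (-1 : ℂ) ^ ((s 0 : ℕ)) *
        (if f = (fun j => if j = 0 then 1 else 1 - s j) then 1 else 0))

/-- for the ideal observables, `|ξ_s⟩` is an eigenvector of `W_s`
with eigenvalue `2√2(n−1)`. -/
theorem stmt9 (n : ℕ) [NeZero n] (hn : 2 ≤ n) (s : Fin n → Fin 2) :
    (Wop n (Aideal n) s).mulVec (ghz n s)
      = ((2 * Real.sqrt 2 * ((n : ℝ) - 1) : ℝ) : ℂ) • ghz n s := by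
  have h1 : (1:ℕ) ≤ n := le_trans one_le_two hn
  have hsq : ∀ a : Fin 2, (-1:ℂ)^((a:ℕ)) * (-1:ℂ)^((a:ℕ)) = 1 := by
    intro a; fin_cases a <;> norm_num
  have hflip : ∀ a : Fin 2,
      (-1:ℂ)^((a:ℕ)) * ((-1:ℂ) * (-1:ℂ)^((((1:Fin 2)-a : Fin 2):ℕ))) = 1 := by
    intro a; fin_cases a <;> norm_num
  set c : ℂ := ((Real.sqrt 2:ℂ))⁻¹ with hc
  set w : ℂ := (-1:ℂ)^((s 0 : ℕ)) with hwdef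
  set G0 : Fin n → Fin 2 := (fun j => if j = 0 then 0 else s j) with hG0
  set G1 : Fin n → Fin 2 := (fun j => if j = 0 then 1 else 1 - s j) with hG1
  have hw : w * w = 1 := hsq (s 0)
  have hA1 : (fun j : Fin n => if j = 0 then Aideal n 0 0 + Aideal n 0 1 else Aideal n j 0)
      = (fun j => if j = 0 then (Real.sqrt 2:ℂ) • σX else σX) := by
    funext j
    by_cases h : j = 0
    · rw [h, if_pos rfl, if_pos rfl, Asum]
    · simp [h, Aideal]
  have hA2 : ∀ j : Fin n, j ≠ 0 →
      (fun k : Fin n => if k = 0 then Aideal n 0 0 - Aideal n 0 1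
          else if k = j then Aideal n j 1 else 1)
      = (fun k => if k = 0 then (Real.sqrt 2:ℂ) • σZ else if k = j then σZ else 1) := by
    intro j hj; funext k
    by_cases h0 : k = 0
    · simp [h0, Adiff]
    · by_cases h1' : k = j <;> simp [h0, h1', hj, Aideal]
  have hW : ∀ f g : Fin n → Fin 2, Wop n (Aideal n) s f g
      = (((n:ℂ)-1) * w) * ((Real.sqrt 2:ℂ) * (if f = (fun j => 1 - g j) then 1 else 0))
        + ∑ j ∈ Finset.univ.filter (fun j : Fin n => j ≠ 0),
            (-1:ℂ)^((s j : ℕ)) * ((Real.sqrt 2:ℂ) * ((-1:ℂ)^((g 0:ℕ)) * (-1:ℂ)^((g j:ℕ)))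
              * (if f = g then 1 else 0)) := by
    intro f g
    simp only [Wop, Matrix.add_apply, Matrix.smul_apply, Matrix.sum_apply, smul_eq_mul, hA1]
    rw [T1_entry]
    congr 1
    refine Finset.sum_congr rfl fun j hj => ?_
    rw [hA2 j (by simpa using hj), Tj_entry n j (by simpa using hj)]
  have hcard : (Finset.univ.filter (fun j : Fin n => j ≠ 0)).card = n - 1 := by
    simp [Finset.filter_ne']
  have e1 : (fun j : Fin n => 1 - G0 j) = G1 := by
    funext j; by_cases h : j = 0 <;> simp [hG0, hG1, h]
  have e2 : (fun j : Fin n => 1 - G1 j) = G0 := by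
    have haux : ∀ a : Fin 2, 1 - (1 - a) = a := by decide
    funext j; by_cases h : j = 0 <;> simp [hG0, hG1, h, haux]
  have hWG0 : ∀ f, Wop n (Aideal n) s f G0
      = ((n:ℂ)-1)*w*(Real.sqrt 2:ℂ)*(if f = G1 then 1 else 0)
        + ((n:ℂ)-1)*(Real.sqrt 2:ℂ)*(if f = G0 then 1 else 0) := by
    intro f
    rw [hW, e1]
    have hterm : ∀ j ∈ Finset.univ.filter (fun j : Fin n => j ≠ 0),
        (-1:ℂ)^((s j : ℕ)) * ((Real.sqrt 2:ℂ) * ((-1:ℂ)^((G0 0:ℕ)) * (-1:ℂ)^((G0 j:ℕ)))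
          * (if f = G0 then 1 else 0))
        = (Real.sqrt 2:ℂ) * (if f = G0 then 1 else 0) := by
      intro j hj
      have hj' : j ≠ 0 := by simpa using hj
      have h0 : G0 0 = 0 := by simp [hG0]
      have hjv : G0 j = s j := by simp [hG0, hj']
      rw [h0, hjv, Fin.val_zero, pow_zero, one_mul]
      linear_combination ((Real.sqrt 2:ℂ) * (if f = G0 then (1:ℂ) else 0)) * hsq (s j)
    rw [Finset.sum_congr rfl hterm, Finset.sum_const, hcard, nsmul_eq_mul]
    push_cast [Nat.cast_sub h1]
    ring
  have hWG1 : ∀ f, Wop n (Aideal n) s f G1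
      = ((n:ℂ)-1)*w*(Real.sqrt 2:ℂ)*(if f = G0 then 1 else 0)
        + ((n:ℂ)-1)*(Real.sqrt 2:ℂ)*(if f = G1 then 1 else 0) := by
    intro f
    rw [hW, e2]
    have hterm : ∀ j ∈ Finset.univ.filter (fun j : Fin n => j ≠ 0),
        (-1:ℂ)^((s j : ℕ)) * ((Real.sqrt 2:ℂ) * ((-1:ℂ)^((G1 0:ℕ)) * (-1:ℂ)^((G1 j:ℕ)))
          * (if f = G1 then 1 else 0))
        = (Real.sqrt 2:ℂ) * (if f = G1 then 1 else 0) := by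
      intro j hj
      have hj' : j ≠ 0 := by simpa using hj
      have h0 : G1 0 = 1 := by simp [hG1]
      have hjv : G1 j = 1 - s j := by simp [hG1, hj']
      rw [h0, hjv, Fin.val_one, pow_one]
      linear_combination ((Real.sqrt 2:ℂ) * (if f = G1 then (1:ℂ) else 0)) * hflip (s j)
    rw [Finset.sum_congr rfl hterm, Finset.sum_const, hcard, nsmul_eq_mul]
    push_cast [Nat.cast_sub h1]
    ring
  have hghz : ghz n s = c • (fun f => if f = G0 then (1:ℂ) else 0)
      + (c * w) • (fun f => if f = G1 then (1:ℂ) else 0) := by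
    funext x
    simp only [ghz, Pi.add_apply, Pi.smul_apply, smul_eq_mul, hG0, hG1, ← hwdef, ← hc]
    ring
  have hdelta : ∀ g : Fin n → Fin 2,
      (Wop n (Aideal n) s).mulVec (fun x => if x = g then (1:ℂ) else 0)
      = fun f => Wop n (Aideal n) s f g := by
    intro g; funext f
    simp only [Matrix.mulVec, dotProduct, mul_ite, mul_one, mul_zero,
      Finset.sum_ite_eq', Finset.mem_univ, if_true]
  rw [hghz, Matrix.mulVec_add, Matrix.mulVec_smul, Matrix.mulVec_smul, hdelta, hdelta]
  funext f
  simp only [Pi.add_apply, Pi.smul_apply, smul_eq_mul, hWG0 f, hWG1 f]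
  push_cast
  linear_combination (c * ((n:ℂ)-1) * (Real.sqrt 2:ℂ) * (if f = G0 then (1:ℂ) else 0)) * hw
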